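/- Let μ be a valuated matroid of rank 2 on the ground set {1,…,n,1̄,…,n̄}. If the minimum of μ_{1 1̄}, μ_{2 2̄}, …, μ_{n n̄} is attained at least twice (or all equal ∞), and μ has rational entries and is realizable over the field of Puiseux series over an algebraically closed field K, then μ is realized by an isotropic 2-dimensional subspace: there exists a 2-dimensional subspace L of the Puiseux series field to the 2n with Plücker vector X satisfying val(X) = μ and X_{1 1̄} + X_{2 2̄} + ⋯ + X_{n n̄} = 0. -/

import Mathlib

/-- The minimum of `f` is attained at least twice, or `f` is identically `∞`. -/
def AAT {ι : Type*} (f : ι → WithTop ℝ) : Prop :=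
  (∀ i, f i = ⊤) ∨ ∃ i j, i ≠ j ∧ f i = f j ∧ ∀ l, f i ≤ f l

/-- The valuation on the field of (generalized Puiseux/Hahn) series over `K` with rational
exponents, pushed to `ℝ ∪ {∞}`. -/
noncomputable def hval {K : Type*} [Field K] (f : HahnSeries ℚ K) : WithTop ℝ :=
  WithTop.map (Rat.cast : ℚ → ℝ) (HahnSeries.addVal ℚ K f)

lemma hval_eq_top_iff {K : Type*} [Field K] {f : HahnSeries ℚ K} :
    hval f = ⊤ ↔ f = 0 := by
  unfold hval
  rw [WithTop.map_eq_top_iff, HahnSeries.addVal_apply, HahnSeries.orderTop_eq_top]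

lemma hval_le_iff {K : Type*} [Field K] {f g : HahnSeries ℚ K} :
    hval f ≤ hval g ↔ f.orderTop ≤ g.orderTop := by
  unfold hval
  rw [HahnSeries.addVal_apply, HahnSeries.addVal_apply]
  exact WithTop.map_le_iff _ (fun {a b} => Rat.cast_le)

lemma orderTop_mul' {K : Type*} [Field K] (f g : HahnSeries ℚ K) :
    (f * g).orderTop = f.orderTop + g.orderTop := by
  have := (HahnSeries.addVal ℚ K).map_mul f g
  simpa only [HahnSeries.addVal_apply] using this

lemma hval_unit_mul {K : Type*} [Field K] {u f : HahnSeries ℚ K}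
    (hu : u.orderTop = 0) : hval (u * f) = hval f := by
  unfold hval
  rw [HahnSeries.addVal_apply, HahnSeries.addVal_apply, orderTop_mul', hu, zero_add]

lemma le_orderTop_sum {K : Type*} [Field K] {ι : Type*} (s : Finset ι)
    (f : ι → HahnSeries ℚ K) (v : WithTop ℚ)
    (h : ∀ l ∈ s, v ≤ (f l).orderTop) : v ≤ (∑ l ∈ s, f l).orderTop := by
  classical
  induction s using Finset.induction with
  | empty => simp
  | @insert a s ha ih =>
    rw [Finset.sum_insert ha]
    refine le_trans (le_min (h _ (Finset.mem_insert_self _ _))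
      (ih fun l hl => h l (Finset.mem_insert_of_mem hl))) ?_
    exact HahnSeries.min_orderTop_le_orderTop_add

/-- If a rank-2 valuated matroid `μ` on `{1,…,n,1̄,…,n̄}` is realizable over the series field
over an algebraically closed field `K` and the minimum of `μ_{11̄}, …, μ_{nn̄}` is attained at
least twice (or all `∞`), then `μ` is realized by an isotropic 2-dimensional subspace: there is
a realization whose Plücker vector `X` satisfies `X_{11̄} + ⋯ + X_{nn̄} = 0`. -/
theorem rank_two_symplectic_realizable {K : Type*} [Field K] [IsAlgClosed K] {n : ℕ}
    (μ : (Fin n ⊕ Fin n) → (Fin n ⊕ Fin n) → WithTop ℝ)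
    (M : Matrix (Fin 2) (Fin n ⊕ Fin n) (HahnSeries ℚ K))
    (hM : LinearIndependent (HahnSeries ℚ K) fun r : Fin 2 => M r)
    (hreal : ∀ a b : Fin n ⊕ Fin n,
      hval (M 0 a * M 1 b - M 0 b * M 1 a) = μ a b)
    (hmin : AAT (fun i : Fin n => μ (Sum.inl i) (Sum.inr i))) :
    ∃ M' : Matrix (Fin 2) (Fin n ⊕ Fin n) (HahnSeries ℚ K),
      (LinearIndependent (HahnSeries ℚ K) fun r : Fin 2 => M' r) ∧
      (∀ a b : Fin n ⊕ Fin n,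
        hval (M' 0 a * M' 1 b - M' 0 b * M' 1 a) = μ a b) ∧
      ∑ i : Fin n,
        (M' 0 (Sum.inl i) * M' 1 (Sum.inr i) - M' 0 (Sum.inr i) * M' 1 (Sum.inl i)) = 0 := by
  classical
  set P : Fin n → HahnSeries ℚ K :=
    fun l => M 0 (Sum.inl l) * M 1 (Sum.inr l) - M 0 (Sum.inr l) * M 1 (Sum.inl l) with hPdef
  have hrealP : ∀ l, hval (P l) = μ (Sum.inl l) (Sum.inr l) := fun l => hreal _ _
  by_cases hall : ∀ l, P l = 0
  · exact ⟨M, hM, hreal, Finset.sum_eq_zero fun l _ => hall l⟩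
  push_neg at hall
  obtain ⟨l0, hl0⟩ := hall
  have hμtop : ∀ l : Fin n, μ (Sum.inl l) (Sum.inr l) = ⊤ → P l = 0 := fun l h =>
    hval_eq_top_iff.mp ((hrealP l).trans h)
  rcases hmin with h | ⟨i, j, hij, hije, hile⟩
  · exact absurd (hμtop l0 (h l0)) hl0
  have hPi : P i ≠ 0 := by
    intro h0
    have hi : μ (Sum.inl i) (Sum.inr i) = ⊤ := by
      rw [← hrealP i, hval_eq_top_iff.mpr h0]
    exact hl0 (hμtop l0 (top_le_iff.mp (hi ▸ hile l0)))
  have hPj : P j ≠ 0 := by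
    intro h0
    have hj : μ (Sum.inl j) (Sum.inr j) = ⊤ := by
      rw [← hrealP j, hval_eq_top_iff.mpr h0]
    exact hPi (hμtop i (hije.trans hj))
  set v : ℚ := (P i).order with hvdef
  have hvtop : (P i).orderTop = (v : WithTop ℚ) :=
    (HahnSeries.order_eq_orderTop_of_ne_zero hPi).symm
  have h_le : ∀ l, (v : WithTop ℚ) ≤ (P l).orderTop := by
    intro l
    rw [← hvtop]
    exact hval_le_iff.mp (by rw [hrealP i, hrealP l]; exact hile l)
  have hjtop : (P j).orderTop = (v : WithTop ℚ) := by
    refine le_antisymm ?_ (h_le j)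
    rw [← hvtop]
    exact hval_le_iff.mp (by rw [hrealP j, hrealP i]; exact le_of_eq hije.symm)
  have hcoeffPiv : (P i).coeff v ≠ 0 := HahnSeries.coeff_orderTop_ne hvtop
  set R : HahnSeries ℚ K := -(∑ l ∈ Finset.univ \ {i, j}, P l) with hRdef
  have hRtop : (v : WithTop ℚ) ≤ R.orderTop := by
    rw [hRdef, HahnSeries.orderTop_neg]
    exact le_orderTop_sum _ _ _ (fun l _ => h_le l)
  -- choose a suitable scalar x
  obtain ⟨x, hx⟩ := Infinite.exists_notMem_finset
    ({0, R.coeff v / (P i).coeff v} : Finset K)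
  simp only [Finset.mem_insert, Finset.mem_singleton, not_or] at hx
  obtain ⟨hx0, hxc⟩ := hx
  have hxne : R.coeff v - x * (P i).coeff v ≠ 0 := by
    intro h
    exact hxc (by rw [eq_div_iff hcoeffPiv]; exact (sub_eq_zero.mp h).symm)
  have hCx : (HahnSeries.C x : HahnSeries ℚ K).orderTop = 0 := by
    rw [show (HahnSeries.C x : HahnSeries ℚ K) = HahnSeries.single 0 x from rfl,
      HahnSeries.orderTop_single hx0]
    rfl
  set Q : HahnSeries ℚ K := R - HahnSeries.C x * (P i) with hQdef
  have hQcoeffv : Q.coeff v = R.coeff v - x * (P i).coeff v := by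
    rw [hQdef, HahnSeries.coeff_sub, HahnSeries.C_mul_eq_smul, HahnSeries.coeff_smul,
      smul_eq_mul]
  have hQtop : Q.orderTop = (v : WithTop ℚ) := by
    refine le_antisymm (HahnSeries.orderTop_le_of_coeff_ne_zero (hQcoeffv ▸ hxne)) ?_
    rw [hQdef, sub_eq_add_neg]
    refine le_trans (le_min hRtop ?_) HahnSeries.min_orderTop_le_orderTop_add
    rw [HahnSeries.orderTop_neg, orderTop_mul', hCx, zero_add]
    exact h_le i
  have hQne : Q ≠ 0 := by
    intro h
    exact hxne (by rw [← hQcoeffv, h, HahnSeries.coeff_zero])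
  set cj : HahnSeries ℚ K := Q / (P j) with hcjdef
  have hcjPj : cj * P j = Q := div_mul_cancel₀ Q hPj
  have hcjne : cj ≠ 0 := by
    intro h
    exact hQne (by rw [← hcjPj, h, zero_mul])
  have hcjtop : cj.orderTop = 0 := by
    have h1 : cj.orderTop + (v : WithTop ℚ) = (v : WithTop ℚ) := by
      rw [← hjtop, ← orderTop_mul', hcjPj, hQtop, hjtop]
    obtain ⟨w, hw⟩ := WithTop.ne_top_iff_exists.mp
      (HahnSeries.orderTop_ne_top.mpr hcjne)
    rw [← hw] at h1 ⊢
    have h2 : w + v = v := by exact_mod_cast h1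
    have h3 : w = 0 := by linarith
    rw [h3]; rfl
  -- the column rescaling factors
  set c : (Fin n ⊕ Fin n) → HahnSeries ℚ K :=
    Sum.elim (fun _ => 1)
      (fun l => if l = i then HahnSeries.C x else if l = j then cj else 1) with hcdef
  have hctop : ∀ a, (c a).orderTop = 0 := by
    rintro (l | l)
    · simp [hcdef, HahnSeries.orderTop_one]
    · simp only [hcdef, Sum.elim_inr]
      split_ifs
      · exact hCx
      · exact hcjtop
      · exact HahnSeries.orderTop_one
  have hcne : ∀ a, c a ≠ 0 := by
    intro a
    apply HahnSeries.orderTop_ne_top.mp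
    rw [hctop a]
    exact (WithTop.coe_ne_top : ((0 : ℚ) : WithTop ℚ) ≠ ⊤)
  set M' : Matrix (Fin 2) (Fin n ⊕ Fin n) (HahnSeries ℚ K) :=
    Matrix.of fun r a => c a * M r a with hM'def
  have hminor : ∀ a b, M' 0 a * M' 1 b - M' 0 b * M' 1 a
      = c a * (c b * (M 0 a * M 1 b - M 0 b * M 1 a)) := by
    intro a b
    simp only [hM'def, Matrix.of_apply]
    ring
  refine ⟨M', ?_, ?_, ?_⟩
  · rw [Fintype.linearIndependent_iff] at hM ⊢
    intro g hg
    refine hM g ?_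
    have hga : ∀ a, g 0 * (c a * M 0 a) + g 1 * (c a * M 1 a) = 0 := by
      intro a
      have := congrFun hg a
      simpa [Fin.sum_univ_two, hM'def] using this
    funext a
    have h2 : c a * (g 0 * M 0 a + g 1 * M 1 a) = 0 := by linear_combination hga a
    have h3 : g 0 * M 0 a + g 1 * M 1 a = 0 := (mul_eq_zero.mp h2).resolve_left (hcne a)
    simpa [Fin.sum_univ_two] using h3
  · intro a b
    rw [hminor a b, hval_unit_mul (hctop a), hval_unit_mul (hctop b)]
    exact hreal a b
  · have hterm : ∀ l : Fin n,
        M' 0 (Sum.inl l) * M' 1 (Sum.inr l) - M' 0 (Sum.inr l) * M' 1 (Sum.inl l)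
          = c (Sum.inr l) * P l := by
      intro l
      rw [hminor (Sum.inl l) (Sum.inr l)]
      simp [hcdef, hPdef]
    calc ∑ l : Fin n, (M' 0 (Sum.inl l) * M' 1 (Sum.inr l)
            - M' 0 (Sum.inr l) * M' 1 (Sum.inl l))
        = ∑ l : Fin n, c (Sum.inr l) * P l := Finset.sum_congr rfl fun l _ => hterm l
      _ = (∑ l ∈ Finset.univ \ {i, j}, c (Sum.inr l) * P l)
            + ∑ l ∈ ({i, j} : Finset (Fin n)), c (Sum.inr l) * P l :=
          (Finset.sum_sdiff (Finset.subset_univ _)).symm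
      _ = (∑ l ∈ Finset.univ \ {i, j}, P l)
            + (HahnSeries.C x * P i + cj * P j) := by
          congr 1
          · refine Finset.sum_congr rfl fun l hl => ?_
            simp only [Finset.mem_sdiff, Finset.mem_insert, Finset.mem_singleton, not_or] at hl
            simp [hcdef, hl.2.1, hl.2.2]
          · rw [Finset.sum_pair hij]
            simp [hcdef, hij.symm]
      _ = 0 := by
          rw [hcjPj, hQdef, hRdef]
          ring
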